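/- Let T' = #·T·$ with sentinels #, $ ∉ Σ, and let W be a nonempty string over Σ that is right-maximal in T'. Among the proper suffixes W' of W whose number of occurrences in T' is strictly greater than that of W, let W* be a longest one (such a suffix exists, e.g. the empty string qualifies). Then W* is a maximal repeat of T'. -/

import Mathlib

/-- Number of (factor) occurrences of `W` in `T`: the number of starting
positions `i` such that `W` is a prefix of `T.drop i`. -/
def occ {α : Type*} [DecidableEq α] (T W : List α) : ℕ :=
  (List.range (T.length + 1)).countP fun i => decide (W <+: T.drop i)

/-- `W` is right-maximal in `T`: at least two distinct right extensions occur. -/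
def rightMax {α : Type*} (T W : List α) : Prop :=
  ∃ b c, b ≠ c ∧ (W ++ [b]) <:+: T ∧ (W ++ [c]) <:+: T

/-- `W` is left-maximal in `T`: at least two distinct left extensions occur. -/
def leftMax {α : Type*} (T W : List α) : Prop :=
  ∃ a c, a ≠ c ∧ (a :: W) <:+: T ∧ (c :: W) <:+: T

/-- with `T' = # · T · $` and `W` nonempty over `Σ` and
right-maximal in `T'`, a longest proper suffix of `W` with strictly more
occurrences than `W` is a maximal repeat of `T'`. -/
lemma infix_iff_exists_drop {α : Type*} (U T : List α) : U <:+: T ↔ ∃ i, U <+: T.drop i := by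
  constructor
  · rintro ⟨s, t, rfl⟩
    exact ⟨s.length, by simp⟩
  · rintro ⟨i, h⟩
    exact h.isInfix.trans (T.drop_suffix i).isInfix

lemma occ_eq_card {α : Type*} [DecidableEq α] (T U : List α) :
    occ T U = ((Finset.range (T.length+1)).filter (fun i => U <+: T.drop i)).card := by
  simp [occ, List.countP_eq_length_filter, Finset.range, Finset.filter, Finset.card,
    Multiset.range, Multiset.filter]
  rfl

theorem longest_more_frequent_suffix_is_maximal_repeat {α : Type*}
    [DecidableEq α] (T W W' : List α) (hash dol : α)
    (hh : hash ∉ T) (hd : dol ∉ T) (hhd : hash ≠ dol)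
    (hW : W ≠ []) (hWsig : ∀ x ∈ W, x ≠ hash ∧ x ≠ dol)
    (hrm : rightMax (hash :: T ++ [dol]) W)
    (hsuf : W' <:+ W) (hne : W' ≠ W)
    (hmore : occ (hash :: T ++ [dol]) W < occ (hash :: T ++ [dol]) W')
    (hlongest : ∀ W'' : List α, W'' <:+ W → W'' ≠ W →
      occ (hash :: T ++ [dol]) W < occ (hash :: T ++ [dol]) W'' →
      W''.length ≤ W'.length) :
    leftMax (hash :: T ++ [dol]) W' ∧ rightMax (hash :: T ++ [dol]) W' := by
  set T' : List α := hash :: T ++ [dol] with hT'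
  obtain ⟨b, c, hbc, hWb, hWc⟩ := hrm
  obtain ⟨V, hV⟩ := hsuf
  -- Right-maximality of W'
  have hrm' : rightMax T' W' := by
    refine ⟨b, c, hbc, ?_, ?_⟩
    · exact (List.IsSuffix.isInfix ⟨V, by rw [← List.append_assoc, hV]⟩).trans hWb
    · exact (List.IsSuffix.isInfix ⟨V, by rw [← List.append_assoc, hV]⟩).trans hWc
  refine ⟨?_, hrm'⟩
  -- Left-maximality
  rcases eq_or_ne W' [] with rfl | hW'ne
  · refine ⟨hash, dol, hhd, ?_, ?_⟩
    · exact ⟨[], T ++ [dol], by simp [hT']⟩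
    · exact ⟨hash :: T, [], by simp [hT']⟩
  · -- W' nonempty; V nonempty
    have hVne : V ≠ [] := by rintro rfl; exact hne (by simpa using hV)
    obtain ⟨V₀, a, rfl⟩ := (List.eq_nil_or_concat V).resolve_left hVne
    have haW' : a :: W' <:+ W := ⟨V₀, by simpa using hV⟩
    have haocc : (a :: W') <:+: T' :=
      (haW'.isInfix).trans ((List.prefix_append W [b]).isInfix.trans hWb)
    by_cases hc : ∃ c', c' ≠ a ∧ (c' :: W') <:+: T'
    · obtain ⟨c', hc'a, hc'occ⟩ := hc
      exact ⟨a, c', Ne.symm hc'a, haocc, hc'occ⟩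
    · push_neg at hc
      exfalso
      have hhead : ∀ x ∈ W', x ≠ hash := fun x hx =>
        (hWsig x (hV ▸ List.mem_append_right _ hx)).1
      -- occ W' ≤ occ (a :: W')
      have key : ∀ i, W' <+: T'.drop i → 1 ≤ i ∧ (a :: W') <+: T'.drop (i-1) := by
        intro i hipre
        obtain ⟨w0, W'', rfl⟩ := List.exists_cons_of_ne_nil hW'ne
        have hi1 : 1 ≤ i := by
          rcases Nat.eq_zero_or_pos i with rfl | h
          · exfalso
            simp only [List.drop_zero, hT'] at hipre
            obtain ⟨t, ht⟩ := hipre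
            have hw0 : w0 = hash := by
              have h2 := congrArg (fun l => l.head?) ht
              simpa using h2
            exact hhead w0 (by simp) hw0
          · exact h
        obtain ⟨j, rfl⟩ : ∃ j, i = j + 1 := ⟨i - 1, (Nat.succ_pred_eq_of_pos hi1).symm⟩
        have hjlt : j < T'.length := by
          have hd : T'.drop (j+1) ≠ [] := by
            intro h; rw [h] at hipre; simp at hipre
          by_contra hctr; push_neg at hctr
          exact hd (List.drop_eq_nil_of_le (le_trans hctr (Nat.le_succ j)))
        have hdropj : T'.drop j = T'[j] :: T'.drop (j+1) := List.drop_eq_getElem_cons hjlt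
        have hpre2 : (T'[j] :: w0 :: W'') <+: T'.drop j := by
          obtain ⟨t, ht2⟩ := hipre
          exact ⟨t, by rw [hdropj, ← ht2]; rfl⟩
        have hja : T'[j] = a := by
          by_contra hTa
          exact hc T'[j] hTa (hpre2.isInfix.trans (T'.drop_suffix j).isInfix)
        refine ⟨Nat.le_add_left 1 j, ?_⟩
        simpa only [Nat.add_sub_cancel, hja] using hpre2
      have hle : occ T' W' ≤ occ T' (a :: W') := by
        rw [occ_eq_card, occ_eq_card]
        apply Finset.card_le_card_of_injOn (fun i => i - 1)
        · intro i hi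
          simp only [Finset.mem_coe, Finset.mem_filter, Finset.mem_range] at hi ⊢
          exact ⟨lt_of_le_of_lt (Nat.sub_le i 1) hi.1, (key i hi.2).2⟩
        · intro i hi j hj hij
          simp only [Finset.mem_coe, Finset.mem_filter, Finset.mem_range] at hi hj
          have h1 := (key i hi.2).1
          have h2 := (key j hj.2).1
          simp only at hij
          omega
      have hlen := hlongest (a :: W') haW' ?_ (lt_of_lt_of_le hmore hle)
      · simp at hlen
      · rintro heq
        rw [heq] at hle
        exact absurd (lt_of_lt_of_le hmore hle) (lt_irrefl _)
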